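/- Let F be a field, D a derivation on F with constant field C, and ω_1,…,ω_n closed Kähler differentials in Ω(F/C) with D*ω_i = 0 for each i. If Σ α_i ω_i = 0 is an F-linear dependence with some α_{i_0} = 1 that is minimal (the forms with nonzero coefficient span a space of dimension one less than their number), then all α_i lie in C. -/

import Mathlib

set_option synthInstance.maxHeartbeats 1000000
set_option maxHeartbeats 1000000

open ExteriorAlgebra

/-- If `ω₁, …, ωₙ` are closed Kähler differentials in `Ω(F/C)` annihilated by `D*`
(where `C` is the constant field of the derivation `D`), and `∑ αᵢ ωᵢ = 0` is a minimal
`F`-linear dependence with some coefficient equal to `1`, then all `αᵢ` lie in `C`.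

Here the de Rham differential `d : Ω¹(F/C) → Ω²(F/C)` (valued in the exterior algebra
of `Ω(F/C)` over `F`) is characterised by `C`-linearity and `d(a · db) = da ∧ db`,
and the degree `-1` interior product `D*` in degree `2` is characterised by
`D*(ω ∧ η) = (D*ω) η − (D*η) ω`, where in degree `1` the interior product `D*` is the
`F`-linear functional on `Ω(F/C)` induced by `D`. -/
theorem minimal_dependence_has_constant_coefficients
    {F : Type*} [Field F] (C : Subfield F)
    (D : Derivation ↥C F F)
    (hC : ∀ a : F, D a = 0 → a ∈ C)
    (dOne : Ω[F⁄↥C] →ₗ[↥C] ExteriorAlgebra F (Ω[F⁄↥C]))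
    (hdOne : ∀ a b : F, dOne (a • KaehlerDifferential.D ↥C F b) =
      ι F (KaehlerDifferential.D ↥C F a) * ι F (KaehlerDifferential.D ↥C F b))
    (Dstar2 : ExteriorAlgebra F (Ω[F⁄↥C]) →ₗ[F] Ω[F⁄↥C])
    (hDstar2 : ∀ ω η : Ω[F⁄↥C], Dstar2 (ι F ω * ι F η) =
      D.liftKaehlerDifferential ω • η - D.liftKaehlerDifferential η • ω)
    (n : ℕ) (ω : Fin n → Ω[F⁄↥C])
    (hclosed : ∀ i, dOne (ω i) = 0)
    (hDstar : ∀ i, D.liftKaehlerDifferential (ω i) = 0)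
    (α : Fin n → F) (i₀ : Fin n) (hα₀ : α i₀ = 1)
    (hdep : ∑ i, α i • ω i = 0)
    (hmin : Module.finrank F ↥(Submodule.span F (ω '' {i | α i ≠ 0})) =
      {i | α i ≠ 0}.ncard - 1) :
    ∀ i, α i ∈ C := by
  classical
  -- Leibniz rule for `dOne`
  have hleib : ∀ w : Ω[F⁄↥C], ∀ a : F,
      dOne (a • w) = ι F (KaehlerDifferential.D ↥C F a) * ι F w + a • dOne w := by
    intro w
    have hw : w ∈ Submodule.span F (Set.range (KaehlerDifferential.D ↥C F)) := by
      rw [KaehlerDifferential.span_range_derivation]; trivial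
    induction hw using Submodule.span_induction with
    | mem x hx =>
      obtain ⟨b, rfl⟩ := hx
      intro a
      have hb : dOne (KaehlerDifferential.D ↥C F b) = 0 := by
        have h := hdOne 1 b
        simpa using h
      rw [hdOne, hb, smul_zero, add_zero]
    | zero =>
      intro a
      simp
    | add x y hx hy ihx ihy =>
      intro a
      rw [smul_add, map_add, ihx a, ihy a, map_add, map_add, mul_add, smul_add]
      abel
    | smul c x hx ih =>
      intro a
      rw [smul_smul, ih (a * c), Derivation.leibniz, map_add, LinearMap.map_smul,
        LinearMap.map_smul, add_mul, smul_mul_assoc, smul_mul_assoc, ih c,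
        LinearMap.map_smul (ι F) c x, mul_smul_comm]
      module
  -- step 1: `∑ dαᵢ ∧ ωᵢ = 0`
  have h0 : ∑ i, ι F (KaehlerDifferential.D ↥C F (α i)) * ι F (ω i) = 0 := by
    have h := map_sum dOne (fun i => α i • ω i) Finset.univ
    rw [hdep, map_zero] at h
    rw [← h.symm]
    apply Finset.sum_congr rfl
    intro i _
    rw [hleib, hclosed, smul_zero, add_zero]
  -- step 2: `∑ (Dαᵢ) ωᵢ = 0`
  have h2 : ∑ i, D (α i) • ω i = 0 := by
    have h := congrArg Dstar2 h0
    rw [map_sum, map_zero] at h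
    rw [← h]
    apply Finset.sum_congr rfl
    intro i _
    rw [hDstar2, hDstar, Derivation.liftKaehlerDifferential_comp_D, zero_smul, sub_zero]
  -- the linear algebra part
  set s : Set (Fin n) := {i | α i ≠ 0} with hs
  have hi₀ : i₀ ∈ s := by simp [hs, hα₀]
  haveI : Fintype ↥s := Set.Finite.fintype (Set.toFinite s)
  set L : (↥s → F) →ₗ[F] Ω[F⁄↥C] :=
    Fintype.linearCombination F (fun i : ↥s => ω i) with hL
  have hrange : LinearMap.range L = Submodule.span F (ω '' s) := by
    rw [hL, Fintype.range_linearCombination]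
    congr 1
    exact (Set.image_eq_range ω s).symm
  have hcard : Fintype.card ↥s = s.ncard := by
    rw [Set.ncard_eq_toFinset_card', Set.toFinset_card]
  have hL_sum : ∀ f : Fin n → F, (∀ i, i ∉ s → f i = 0) →
      L (fun i : ↥s => f i) = ∑ i, f i • ω i := by
    intro f hf
    rw [hL, Fintype.linearCombination_apply]
    rw [show (∑ i : ↥s, f i • ω i) = ∑ i ∈ s.toFinset, f i • ω i from
      Finset.sum_set_coe (f := fun i => f i • ω i) s]
    apply Finset.sum_subset (Finset.subset_univ _)
    intro i _ hi
    rw [hf i (by simpa using hi), zero_smul]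
  have hαker : L (fun i : ↥s => α i) = 0 := by
    rw [hL_sum α (fun i hi => by simpa [hs] using hi), hdep]
  have hβker : L (fun i : ↥s => D (α i)) = 0 := by
    rw [hL_sum (fun i => D (α i)) (fun i hi => by
      have hz : α i = 0 := by simpa [hs] using hi
      simp [hz]), h2]
  -- kernel is one-dimensional
  have hker : Module.finrank F ↥(LinearMap.ker L) = 1 := by
    have hrn := LinearMap.finrank_range_add_finrank_ker L
    rw [hrange, hmin, Module.finrank_fintype_fun_eq_card, hcard] at hrn
    have hpos : 1 ≤ s.ncard := by
      have : s.Nonempty := ⟨i₀, hi₀⟩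
      have := Set.ncard_pos (Set.toFinite s) |>.mpr this
      omega
    omega
  -- α restricted to s is a nonzero kernel element
  set a : ↥(LinearMap.ker L) := ⟨fun i : ↥s => α i, hαker⟩ with ha
  set b : ↥(LinearMap.ker L) := ⟨fun i : ↥s => D (α i), hβker⟩ with hb
  have hane : a ≠ 0 := by
    intro h
    have := congrFun (congrArg (Subtype.val) h) ⟨i₀, hi₀⟩
    simp [ha, hα₀] at this
  obtain ⟨c, hc⟩ := (finrank_eq_one_iff_of_nonzero' a hane).mp hker b
  have hc0 : c = 0 := by
    have h := congrFun (congrArg (Subtype.val) hc) ⟨i₀, hi₀⟩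
    simpa [ha, hb, hα₀] using h
  have hDα : ∀ i, D (α i) = 0 := by
    intro i
    by_cases hi : i ∈ s
    · have := congrFun (congrArg (Subtype.val) hc) ⟨i, hi⟩
      simp [ha, hb, hc0] at this
      exact this.symm
    · have : α i = 0 := by simpa [hs] using hi
      rw [this, map_zero]
  intro i
  exact hC (α i) (hDα i)
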